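/- Let U be a finite set, t ∈ ℕ, and suppose U is partitioned into parts (λ^{-1}(c))_{c ∈ C} each of size at most (α/8)|U| for some 0 < α < 1. Then there is a partition U = U_1 ∪ ... ∪ U_t with t ≤ 4/α such that each U_i has size at most (α/2)|U| and each part λ^{-1}(c) is entirely contained in some U_i. -/

import Mathlib

open scoped Classical

/-- Greedy grouping of colour fibres: if every fibre `λ⁻¹(c) ∩ U` has size at
most `(α/8)|U|`, then `U` can be partitioned into at most `4/α` parts, each of
size at most `(α/2)|U|`, with every fibre entirely contained in one part. -/
theorem stmt_7 {V C : Type*} [DecidableEq V] (U : Finset V) (lam : V → C)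
    (α : ℝ) (hα0 : 0 < α) (hα1 : α < 1)
    (hfib : ∀ c : C, ((U.filter (fun v => lam v = c)).card : ℝ) ≤ (α / 8) * U.card) :
    ∃ (t : ℕ) (P : Fin t → Finset V),
      (t : ℝ) ≤ 4 / α ∧
      (∀ i, P i ⊆ U) ∧
      (∀ v ∈ U, ∃! i, v ∈ P i) ∧
      (∀ i, ((P i).card : ℝ) ≤ (α / 2) * U.card) ∧
      (∀ c : C, ∃ i, U.filter (fun v => lam v = c) ⊆ P i) := by
  set n : ℝ := (U.card : ℝ) with hn
  have hn0 : 0 ≤ n := by positivity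
  set t : ℕ := ⌊4 / α⌋₊ with htdef
  have h4α : (0:ℝ) ≤ 4 / α := by positivity
  have htle : (t : ℝ) ≤ 4 / α := Nat.floor_le h4α
  have htgt : 4 / α - 1 < (t : ℝ) := Nat.sub_one_lt_floor _
  have h3 : 3 / α ≤ (t : ℝ) := by
    have h1 : (1:ℝ) ≤ 1 / α := by
      rw [le_div_iff₀ hα0]; linarith
    have : 3 / α ≤ 4 / α - 1 := by
      have : 4 / α = 3 / α + 1 / α := by ring
      linarith
    linarith
  have ht0 : 0 < t := by
    have : (0:ℝ) < 3 / α := by positivity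
    have : (0:ℝ) < (t:ℝ) := lt_of_lt_of_le this h3
    exact_mod_cast this
  have htR : (0:ℝ) < (t:ℝ) := by exact_mod_cast ht0
  -- key induction: assign colours in s to bins keeping loads small
  have key : ∀ s : Finset C, ∃ f : C → Fin t,
      ∀ i : Fin t,
        ((U.filter (fun v => lam v ∈ s ∧ f (lam v) = i)).card : ℝ) ≤ (α / 2) * n := by
    intro s
    induction s using Finset.induction_on with
    | empty =>
        refine ⟨fun _ => ⟨0, ht0⟩, fun i => ?_⟩
        simp only [Finset.notMem_empty, false_and, Finset.filter_false, Finset.card_empty,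
          Nat.cast_zero]
        positivity
    | @insert c s hc ih =>
        obtain ⟨f, hf⟩ := ih
        -- loads
        have huniv : (Finset.univ : Finset (Fin t)).Nonempty := ⟨⟨0, ht0⟩, Finset.mem_univ _⟩
        obtain ⟨i₀, -, hmin⟩ := Finset.exists_min_image Finset.univ
          (fun i => ((U.filter (fun v => lam v ∈ s ∧ f (lam v) = i)).card : ℝ)) huniv
        -- sum of loads ≤ n
        have hsum : ∑ i : Fin t, ((U.filter (fun v => lam v ∈ s ∧ f (lam v) = i)).card : ℝ)
            ≤ n := by
          have : ∑ i : Fin t, (U.filter (fun v => lam v ∈ s ∧ f (lam v) = i)).card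
              = (U.filter (fun v => lam v ∈ s)).card := by
            rw [Finset.card_eq_sum_card_fiberwise
              (f := fun v => f (lam v)) (t := (Finset.univ : Finset (Fin t)))
              (fun v _ => Finset.mem_univ _)]
            apply Finset.sum_congr rfl
            intro i _
            congr 1
            ext v
            simp [Finset.mem_filter, and_assoc]
          calc ∑ i : Fin t, ((U.filter (fun v => lam v ∈ s ∧ f (lam v) = i)).card : ℝ)
              = ((U.filter (fun v => lam v ∈ s)).card : ℝ) := by exact_mod_cast this
            _ ≤ n := by exact_mod_cast Nat.cast_le.mpr (Finset.card_filter_le _ _)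
        have hminle : ((U.filter (fun v => lam v ∈ s ∧ f (lam v) = i₀)).card : ℝ) ≤ n / t := by
          rw [le_div_iff₀ htR]
          calc ((U.filter (fun v => lam v ∈ s ∧ f (lam v) = i₀)).card : ℝ) * t
              = ∑ _i : Fin t, ((U.filter (fun v => lam v ∈ s ∧ f (lam v) = i₀)).card : ℝ) := by
                simp [mul_comm]
            _ ≤ ∑ i : Fin t, ((U.filter (fun v => lam v ∈ s ∧ f (lam v) = i)).card : ℝ) :=
                Finset.sum_le_sum (fun i _ => hmin i (Finset.mem_univ i))
            _ ≤ n := hsum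
        refine ⟨Function.update f c i₀, fun i => ?_⟩
        by_cases hi : i = i₀
        · subst hi
          have hsub : U.filter (fun v => lam v ∈ insert c s ∧ Function.update f c i (lam v) = i)
              ⊆ U.filter (fun v => lam v ∈ s ∧ f (lam v) = i) ∪ U.filter (fun v => lam v = c) := by
            intro v hv
            simp only [Finset.mem_filter, Finset.mem_insert] at hv
            rcases hv with ⟨hvU, hvc | hvs, hfi⟩
            · exact Finset.mem_union_right _ (by simp [Finset.mem_filter, hvU, hvc])
            · have hne : lam v ≠ c := fun h => hc (h ▸ hvs)
              rw [Function.update_of_ne hne] at hfi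
              exact Finset.mem_union_left _ (by simp [Finset.mem_filter, hvU, hvs, hfi])
          calc ((U.filter (fun v => lam v ∈ insert c s ∧ Function.update f c i (lam v) = i)).card : ℝ)
              ≤ ((U.filter (fun v => lam v ∈ s ∧ f (lam v) = i)).card : ℝ)
                + ((U.filter (fun v => lam v = c)).card : ℝ) := by
                have := Finset.card_le_card hsub
                have h2 := Finset.card_union_le (U.filter (fun v => lam v ∈ s ∧ f (lam v) = i))
                  (U.filter (fun v => lam v = c))
                exact_mod_cast le_trans this h2
            _ ≤ n / t + (α / 8) * n := add_le_add hminle (hfib c)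
            _ ≤ (α / 3) * n + (α / 8) * n := by
                have : n / (t:ℝ) ≤ (α / 3) * n := by
                  rw [div_le_iff₀ htR]
                  calc n = (α/3) * n * (3/α) := by field_simp
                    _ ≤ (α/3) * n * t := by
                        apply mul_le_mul_of_nonneg_left h3; positivity
                linarith
            _ ≤ (α / 2) * n := by nlinarith
        · have heq : U.filter (fun v => lam v ∈ insert c s ∧ Function.update f c i₀ (lam v) = i)
              = U.filter (fun v => lam v ∈ s ∧ f (lam v) = i) := by
            ext v
            simp only [Finset.mem_filter, Finset.mem_insert]
            constructor
            · rintro ⟨hvU, hvc | hvs, hfi⟩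
              · rw [hvc, Function.update_self] at hfi
                exact absurd hfi.symm hi
              · have hne : lam v ≠ c := fun h => hc (h ▸ hvs)
                rw [Function.update_of_ne hne] at hfi
                exact ⟨hvU, hvs, hfi⟩
            · rintro ⟨hvU, hvs, hfi⟩
              have hne : lam v ≠ c := fun h => hc (h ▸ hvs)
              exact ⟨hvU, Or.inr hvs, by rw [Function.update_of_ne hne]; exact hfi⟩
          rw [heq]
          exact hf i
  obtain ⟨f, hf⟩ := key (U.image lam)
  refine ⟨t, fun i => U.filter (fun v => f (lam v) = i), htle,
    fun i => Finset.filter_subset _ _, ?_, ?_, ?_⟩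
  · intro v hv
    refine ⟨f (lam v), by simp [Finset.mem_filter, hv], fun i hi => ?_⟩
    simp only [Finset.mem_filter] at hi
    exact hi.2.symm
  · intro i
    have := hf i
    have heq : U.filter (fun v => lam v ∈ U.image lam ∧ f (lam v) = i)
        = U.filter (fun v => f (lam v) = i) := by
      ext v
      simp only [Finset.mem_filter, Finset.mem_image]
      exact ⟨fun ⟨h1, _, h3⟩ => ⟨h1, h3⟩, fun ⟨h1, h2⟩ => ⟨h1, ⟨v, h1, rfl⟩, h2⟩⟩
    rwa [heq] at this
  · intro c
    refine ⟨f c, fun v hv => ?_⟩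
    simp only [Finset.mem_filter] at hv ⊢
    exact ⟨hv.1, by rw [hv.2]⟩
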